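/- Equivalence of discrete seminorms: for h > 0 and f ∈ L²_h(hℤ), (2/π) ‖f‖_{Ḣ¹_h} ≤ ‖D⁺_h f‖_{L²_h} ≤ ‖f‖_{Ḣ¹_h}, where ‖f‖_{Ḣ¹_h}² = ∫_{−π/h}^{π/h} ξ² |f̂(ξ)|² dξ. -/

import Mathlib

open MeasureTheory Real
open scoped ENNReal NNReal

noncomputable def L2h (h : ℝ) (f : ℤ → ℂ) : ℝ := Real.sqrt (h * ∑' m : ℤ, ‖f m‖ ^ 2)

noncomputable def Dh (h : ℝ) (f : ℤ → ℂ) : ℤ → ℂ := fun m => (f (m + 1) - f m) / h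

noncomputable def fhat (h : ℝ) (f : ℤ → ℂ) (ξ : ℝ) : ℂ :=
  ((h / Real.sqrt (2 * π) : ℝ) : ℂ) *
    ∑' m : ℤ, f m * Complex.exp (-Complex.I * ((h * m : ℝ) : ℂ) * (ξ : ℂ))

namespace SeminormEquiv

lemma norm_term (a ξ : ℝ) : ‖Complex.exp (-Complex.I * (a:ℂ) * (ξ:ℂ))‖ = 1 := by
  have h : (-Complex.I * (a:ℂ) * (ξ:ℂ)) = ((-(a*ξ) : ℝ) : ℂ) * Complex.I := by push_cast; ring
  rw [h, Complex.norm_exp_ofReal_mul_I]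

lemma cont_S (h : ℝ) (g : ℤ → ℂ) (hg : Summable fun m => ‖g m‖) :
    Continuous (fun ξ : ℝ => ∑' m : ℤ, g m * Complex.exp (-Complex.I * ((h*m:ℝ):ℂ) * (ξ:ℂ))) := by
  apply continuous_tsum (u := fun m => ‖g m‖) _ hg
  · intro m ξ
    rw [norm_mul, norm_term]
    simp
  · intro m
    fun_prop

lemma norm_exp_sq (θ : ℝ) : ‖Complex.exp (Complex.I * (θ:ℂ)) - 1‖^2 = 4 * Real.sin (θ/2)^2 := by
  rw [mul_comm Complex.I, Complex.exp_mul_I, Complex.sq_norm,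
    Complex.normSq_apply]
  simp only [Complex.add_re, Complex.sub_re, Complex.mul_re, Complex.I_re, Complex.I_im,
    Complex.cos_ofReal_re, Complex.sin_ofReal_re, Complex.cos_ofReal_im, Complex.sin_ofReal_im,
    Complex.one_re, Complex.one_im, Complex.add_im, Complex.sub_im, Complex.mul_im]
  have h1 : Real.cos θ = 2 * Real.cos (θ/2)^2 - 1 := by
    have := Real.cos_two_mul (θ/2); rw [show 2*(θ/2) = θ by ring] at this; exact this
  have h2 := Real.sin_sq_add_cos_sq θ
  have h3 := Real.sin_sq_add_cos_sq (θ/2)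
  nlinarith [h1, h2, h3]

lemma ortho (h : ℝ) (hh : 0 < h) (k : ℤ) :
    (∫ ξ in (-(π/h))..(π/h), Complex.exp (-Complex.I * ((h*k : ℝ):ℂ) * (ξ:ℂ)))
      = if k = 0 then ((2*π/h : ℝ) : ℂ) else 0 := by
  by_cases hk : k = 0
  · subst hk
    simp only [Int.cast_zero, mul_zero, Complex.ofReal_zero, zero_mul, mul_zero, neg_mul,
      Complex.ofReal_zero, if_true]
    rw [intervalIntegral.integral_congr (g := fun _ => (1:ℂ)) (fun ξ _ => by simp)]
    rw [intervalIntegral.integral_const]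
    push_cast
    rw [Complex.real_smul]
    push_cast
    ring
  · have hc : (-Complex.I * ((h*k : ℝ):ℂ)) ≠ 0 := by
      apply mul_ne_zero
      · simp [Complex.I_ne_zero]
      · rw [Complex.ofReal_ne_zero]
        exact mul_ne_zero hh.ne' (Int.cast_ne_zero.mpr hk)
    rw [integral_exp_mul_complex hc]
    have h1 : (-Complex.I * ((h*k : ℝ):ℂ)) * ((π/h : ℝ):ℂ) = k * (-(π:ℂ) * Complex.I) := by
      push_cast
      have : (h:ℂ) ≠ 0 := by exact_mod_cast hh.ne'
      field_simp
    have h2 : (-Complex.I * ((h*k : ℝ):ℂ)) * ((-(π/h) : ℝ):ℂ) = k * ((π:ℂ) * Complex.I) := by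
      push_cast
      have : (h:ℂ) ≠ 0 := by exact_mod_cast hh.ne'
      field_simp
    rw [h1, h2, Complex.exp_int_mul, Complex.exp_int_mul]
    have e1 : Complex.exp (-(π:ℂ) * Complex.I) = -1 := by
      rw [show (-(π:ℂ) * Complex.I) = -((π:ℂ)*Complex.I) by ring, Complex.exp_neg,
        Complex.exp_pi_mul_I]
      norm_num
    rw [e1, Complex.exp_pi_mul_I, if_neg hk, sub_self, zero_div]

lemma plancherel (h : ℝ) (hh : 0 < h) (g : ℤ → ℂ) (hg : Summable fun m => ‖g m‖) :
    ∫ ξ in (-(π/h))..(π/h), ‖fhat h g ξ‖^2 = h * ∑' m : ℤ, ‖g m‖^2 := by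
  have hπ := Real.pi_pos
  have hab : (-(π/h)) ≤ π/h := by
    have := div_pos hπ hh; linarith
  set S : ℝ → ℂ := fun ξ => ∑' m : ℤ, g m * Complex.exp (-Complex.I * ((h*m:ℝ):ℂ) * (ξ:ℂ)) with hS
  set T : ℤ × ℤ → ℝ → ℂ := fun p ξ => g p.1 * (starRingEnd ℂ) (g p.2) *
    Complex.exp (-Complex.I * ((h*((p.1 : ℝ) - (p.2 : ℝ)):ℝ):ℂ) * (ξ:ℂ)) with hT
  have hTnorm : ∀ p (ξ : ℝ), ‖T p ξ‖ = ‖g p.1‖ * ‖g p.2‖ := by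
    intro p ξ
    rw [hT]
    simp only [norm_mul, norm_term, mul_one, RCLike.norm_conj]
  have hconjS : ∀ ξ : ℝ, (starRingEnd ℂ) (S ξ)
      = ∑' n : ℤ, (starRingEnd ℂ) (g n * Complex.exp (-Complex.I * ((h*n:ℝ):ℂ) * (ξ:ℂ))) := by
    intro ξ
    rw [hS, starRingEnd_apply, tsum_star]
    rfl
  have key : ∀ ξ : ℝ, S ξ * (starRingEnd ℂ) (S ξ) = ∑' p : ℤ × ℤ, T p ξ := by
    intro ξ
    rw [hconjS ξ, hS]
    rw [tsum_mul_tsum_of_summable_norm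
      (by simpa only [norm_mul, norm_term, mul_one] using hg)
      (by simpa only [RingHomIsometric.norm_map, norm_mul, norm_term, mul_one,
        RCLike.norm_conj] using hg)]
    apply tsum_congr
    intro p
    rw [hT]
    simp only [map_mul]
    have hce : (starRingEnd ℂ) (Complex.exp (-Complex.I * ((h*(p.2:ℝ):ℝ):ℂ) * (ξ:ℂ)))
        = Complex.exp (Complex.I * ((h*(p.2:ℝ):ℝ):ℂ) * (ξ:ℂ)) := by
      rw [← Complex.exp_conj]
      congr 1
      simp only [map_mul, Complex.conj_I, Complex.conj_ofReal, map_neg]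
      ring
    rw [hce]
    rw [show g p.1 * Complex.exp (-Complex.I * ((h*(p.1:ℝ):ℝ):ℂ) * (ξ:ℂ)) *
        ((starRingEnd ℂ) (g p.2) * Complex.exp (Complex.I * ((h*(p.2:ℝ):ℝ):ℂ) * (ξ:ℂ)))
        = g p.1 * (starRingEnd ℂ) (g p.2) *
          (Complex.exp (-Complex.I * ((h*(p.1:ℝ):ℝ):ℂ) * (ξ:ℂ)) *
           Complex.exp (Complex.I * ((h*(p.2:ℝ):ℝ):ℂ) * (ξ:ℂ))) by ring]
    rw [← Complex.exp_add]
    congr 2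
    push_cast
    ring
  have h2π : (0:ℝ) < 2*π := by linarith
  have hfh : ∀ ξ : ℝ, ‖fhat h g ξ‖^2 = (h^2/(2*π)) * (S ξ * (starRingEnd ℂ) (S ξ)).re := by
    intro ξ
    rw [Complex.mul_conj]
    rw [Complex.ofReal_re, Complex.normSq_eq_norm_sq]
    rw [fhat, norm_mul, mul_pow]
    congr 1
    rw [Complex.norm_real, Real.norm_eq_abs, abs_of_nonneg (by positivity), div_pow,
      Real.sq_sqrt h2π.le]
  have hcS : Continuous S := cont_S h g hg
  have hcU : Continuous fun ξ : ℝ => S ξ * (starRingEnd ℂ) (S ξ) :=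
    hcS.mul (Complex.continuous_conj.comp hcS)
  have hint : IntegrableOn (fun ξ : ℝ => S ξ * (starRingEnd ℂ) (S ξ))
      (Set.Ioc (-(π/h)) (π/h)) volume :=
    (hcU.integrableOn_Icc).mono_set Set.Ioc_subset_Icc_self
  have hTmeas : ∀ p : ℤ × ℤ, AEStronglyMeasurable (T p)
      (volume.restrict (Set.Ioc (-(π/h)) (π/h))) := by
    intro p
    apply Continuous.aestronglyMeasurable
    rw [hT]
    fun_prop
  have hgnn : Summable fun m : ℤ => ‖g m‖₊ := by
    rw [← NNReal.summable_coe]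
    exact hg
  have hlint : ∑' p : ℤ × ℤ, ∫⁻ ξ in Set.Ioc (-(π/h)) (π/h), ‖T p ξ‖₊ ≠ ⊤ := by
    have hev : ∀ p : ℤ × ℤ, ∫⁻ ξ in Set.Ioc (-(π/h)) (π/h), (‖T p ξ‖₊ : ℝ≥0∞)
        = (‖g p.1‖₊ * ‖g p.2‖₊ : ℝ≥0∞) * volume (Set.Ioc (-(π/h)) (π/h)) := by
      intro p
      have : ∀ ξ : ℝ, (‖T p ξ‖₊ : ℝ≥0∞) = ((‖g p.1‖₊ * ‖g p.2‖₊ : ℝ≥0∞)) := by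
        intro ξ
        have : ‖T p ξ‖₊ = ‖g p.1‖₊ * ‖g p.2‖₊ := by
          ext; push_cast; exact hTnorm p ξ
        rw [this]; push_cast; ring
      simp_rw [this]
      rw [setLIntegral_const]
    simp_rw [hev]
    rw [ENNReal.tsum_mul_right]
    apply ENNReal.mul_ne_top
    · rw [ENNReal.tsum_prod']
      have : ∀ m : ℤ, ∑' n : ℤ, ((‖g m‖₊ * ‖g n‖₊ : ℝ≥0) : ℝ≥0∞)
          = (‖g m‖₊ : ℝ≥0∞) * ∑' n : ℤ, (‖g n‖₊ : ℝ≥0∞) := by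
        intro m
        push_cast
        rw [ENNReal.tsum_mul_left]
      simp_rw [ENNReal.coe_mul] at this ⊢
      simp_rw [this]
      rw [ENNReal.tsum_mul_right]
      exact ENNReal.mul_ne_top (ENNReal.tsum_coe_ne_top_iff_summable.2 hgnn)
        (ENNReal.tsum_coe_ne_top_iff_summable.2 hgnn)
    · exact (measure_Ioc_lt_top).ne
  have hswap : (∫ ξ in Set.Ioc (-(π/h)) (π/h), S ξ * (starRingEnd ℂ) (S ξ))
      = ∑' p : ℤ × ℤ, ∫ ξ in Set.Ioc (-(π/h)) (π/h), T p ξ := by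
    simp_rw [key]
    exact integral_tsum hTmeas hlint
  have hTint : ∀ p : ℤ × ℤ, (∫ ξ in Set.Ioc (-(π/h)) (π/h), T p ξ)
      = if p.1 = p.2 then g p.1 * (starRingEnd ℂ) (g p.1) * ((2*π/h : ℝ):ℂ) else 0 := by
    intro p
    rw [← intervalIntegral.integral_of_le hab]
    have hTe : ∀ ξ : ℝ, T p ξ = g p.1 * (starRingEnd ℂ) (g p.2) *
        Complex.exp (-Complex.I * ((h*((p.1 - p.2 : ℤ)) : ℝ):ℂ) * (ξ:ℂ)) := by
      intro ξ
      rw [hT]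
      push_cast
      ring_nf
    rw [intervalIntegral.integral_congr (g := fun ξ : ℝ => g p.1 * (starRingEnd ℂ) (g p.2) *
        Complex.exp (-Complex.I * ((h*((p.1 - p.2 : ℤ)) : ℝ):ℂ) * (ξ:ℂ))) (fun ξ _ => hTe ξ)]
    rw [intervalIntegral.integral_const_mul, ortho h hh (p.1 - p.2)]
    rcases eq_or_ne p.1 p.2 with he | he
    · rw [if_pos (sub_eq_zero.mpr he), if_pos he, he]
    · rw [if_neg (fun hc => he (sub_eq_zero.mp hc)), if_neg he, mul_zero]
  have hdiag : (∑' p : ℤ × ℤ, if p.1 = p.2 then g p.1 * (starRingEnd ℂ) (g p.1) * ((2*π/h : ℝ):ℂ) else 0)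
      = ∑' m : ℤ, g m * (starRingEnd ℂ) (g m) * ((2*π/h : ℝ):ℂ) := by
    have hinj : Function.Injective (fun m : ℤ => ((m, m) : ℤ × ℤ)) := by
      intro a b hab'
      simpa using congrArg Prod.fst hab'
    have hsupp : Function.support (fun p : ℤ × ℤ =>
        if p.1 = p.2 then g p.1 * (starRingEnd ℂ) (g p.1) * ((2*π/h : ℝ):ℂ) else 0)
        ⊆ Set.range (fun m : ℤ => ((m, m) : ℤ × ℤ)) := by
      intro p hp
      by_cases hpd : p.1 = p.2
      · obtain ⟨m, n⟩ := p
        cases hpd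
        exact ⟨m, rfl⟩
      · simp [hpd] at hp
    have := Function.Injective.tsum_eq hinj hsupp
    rw [← this]
    simp
  rw [intervalIntegral.integral_of_le hab]
  have hre : (∫ ξ in Set.Ioc (-(π/h)) (π/h), ‖fhat h g ξ‖^2)
      = (h^2/(2*π)) * (∫ ξ in Set.Ioc (-(π/h)) (π/h), S ξ * (starRingEnd ℂ) (S ξ)).re := by
    simp only [← RCLike.re_eq_complex_re]
    rw [← integral_re hint]
    rw [← integral_const_mul]
    apply setIntegral_congr_fun measurableSet_Ioc
    intro ξ _
    exact hfh ξ
  rw [hre, hswap]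
  simp_rw [hTint]
  rw [hdiag]
  have hgm : ∀ m : ℤ, g m * (starRingEnd ℂ) (g m) * ((2*π/h : ℝ):ℂ)
      = (((‖g m‖^2 * (2*π/h) : ℝ)):ℂ) := by
    intro m
    rw [Complex.mul_conj, Complex.normSq_eq_norm_sq]
    push_cast
    ring
  simp_rw [hgm]
  rw [← Complex.ofReal_tsum]
  rw [Complex.ofReal_re]
  rw [tsum_mul_right]
  field_simp

lemma fhat_Dh (h : ℝ) (hh : 0 < h) (f : ℤ → ℂ) (hf : Summable fun m : ℤ => ‖f m‖) (ξ : ℝ) :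
    fhat h (Dh h f) ξ
      = (Complex.exp (Complex.I * ((h*ξ : ℝ):ℂ)) - 1) / (h:ℂ) * fhat h f ξ := by
  have hf1 : Summable fun m : ℤ => ‖f (m+1)‖ := by
    have := (Equiv.addRight (1:ℤ)).summable_iff (f := fun m : ℤ => ‖f m‖)
    exact this.mpr hf
  have hs1 : Summable fun m : ℤ => f m * Complex.exp (-Complex.I * ((h*m:ℝ):ℂ) * (ξ:ℂ)) := by
    apply Summable.of_norm
    simpa only [norm_mul, norm_term, mul_one] using hf
  have hs2 : Summable fun m : ℤ => f (m+1) * Complex.exp (-Complex.I * ((h*m:ℝ):ℂ) * (ξ:ℂ)) := by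
    apply Summable.of_norm
    simpa only [norm_mul, norm_term, mul_one] using hf1
  have shift : (∑' m : ℤ, f (m+1) * Complex.exp (-Complex.I * ((h*m:ℝ):ℂ) * (ξ:ℂ)))
      = Complex.exp (Complex.I * ((h*ξ : ℝ):ℂ)) *
        ∑' m : ℤ, f m * Complex.exp (-Complex.I * ((h*m:ℝ):ℂ) * (ξ:ℂ)) := by
    have he := (Equiv.addRight (1:ℤ)).tsum_eq
      (f := fun m : ℤ => f m * Complex.exp (-Complex.I * ((h*((m:ℝ)-1):ℝ):ℂ) * (ξ:ℂ)))
    simp only [Equiv.coe_addRight] at he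
    have hstep : ∀ m : ℤ, f (m+1) * Complex.exp (-Complex.I * ((h*m:ℝ):ℂ) * (ξ:ℂ))
        = f (m+1) * Complex.exp (-Complex.I * ((h*(((m+1 : ℤ):ℝ)-1):ℝ):ℂ) * (ξ:ℂ)) := by
      intro m
      congr 3
      push_cast
      ring
    rw [tsum_congr hstep, he]
    rw [← tsum_mul_left]
    apply tsum_congr
    intro m
    rw [show Complex.exp (Complex.I * ((h*ξ : ℝ):ℂ)) *
        (f m * Complex.exp (-Complex.I * ((h*m:ℝ):ℂ) * (ξ:ℂ)))
        = f m * (Complex.exp (Complex.I * ((h*ξ : ℝ):ℂ)) *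
          Complex.exp (-Complex.I * ((h*m:ℝ):ℂ) * (ξ:ℂ))) by ring]
    rw [← Complex.exp_add]
    congr 2
    push_cast
    ring
  simp only [fhat, Dh]
  have hterm : ∀ m : ℤ, (f (m + 1) - f m) / (h:ℂ) * Complex.exp (-Complex.I * ((h*m:ℝ):ℂ) * (ξ:ℂ))
      = (f (m+1) * Complex.exp (-Complex.I * ((h*m:ℝ):ℂ) * (ξ:ℂ))
         - f m * Complex.exp (-Complex.I * ((h*m:ℝ):ℂ) * (ξ:ℂ))) / (h:ℂ) := by
    intro m; ring
  rw [tsum_congr hterm, tsum_div_const, Summable.tsum_sub hs2 hs1, shift]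
  ring

lemma low_bound (h : ℝ) (hh : 0 < h) (ξ : ℝ) (hξ : |ξ| ≤ π / h) :
    (2/π)^2 * ξ^2 ≤ 4 * Real.sin (h*ξ/2)^2 / h^2 := by
  have hπ := Real.pi_pos
  have hx0 : 0 ≤ h * |ξ| / 2 := by positivity
  have hx1 : h * |ξ| / 2 ≤ π / 2 := by
    have : h * |ξ| ≤ π := by
      calc h * |ξ| ≤ h * (π / h) := by nlinarith
        _ = π := by field_simp
    linarith
  have h1 := Real.mul_le_sin hx0 hx1
  have h2 : (0:ℝ) ≤ 2 / π * (h * |ξ| / 2) := by positivity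
  have h3 : Real.sin (h * |ξ| / 2)^2 = Real.sin (h*ξ/2)^2 := by
    rcases abs_cases ξ with ⟨he, _⟩ | ⟨he, _⟩
    · rw [he]
    · rw [he]
      rw [show h * -ξ / 2 = -(h * ξ / 2) by ring, Real.sin_neg]
      ring
  have h4 := mul_self_le_mul_self h2 h1
  rw [le_div_iff₀ (by positivity : (0:ℝ) < h^2)]
  have h5 : (2/π)^2 * ξ^2 * h^2 = 4 * (2 / π * (h * |ξ| / 2) * (2 / π * (h * |ξ| / 2))) := by
    rw [← sq_abs ξ]; ring
  have h6 : Real.sin (h*|ξ|/2) * Real.sin (h*|ξ|/2) = Real.sin (h*ξ/2)^2 := by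
    rw [← h3]; ring
  linarith [h4]

lemma up_bound (h : ℝ) (hh : 0 < h) (ξ : ℝ) :
    4 * Real.sin (h*ξ/2)^2 / h^2 ≤ ξ^2 := by
  have h1 := Real.abs_sin_le_abs (x := h*ξ/2)
  rw [div_le_iff₀ (by positivity : (0:ℝ) < h^2)]
  nlinarith [sq_abs (Real.sin (h*ξ/2)), sq_abs (h*ξ/2), abs_nonneg (h*ξ/2),
    abs_nonneg (Real.sin (h*ξ/2))]

end SeminormEquiv

open SeminormEquiv

theorem seminorm_equivalence (h : ℝ) (hh : 0 < h) (f : ℤ → ℂ)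
    (hf : Summable fun m : ℤ => ‖f m‖) :
    (2 / π) * Real.sqrt (∫ ξ in (-(π / h))..(π / h), ξ ^ 2 * ‖fhat h f ξ‖ ^ 2) ≤
        L2h h (Dh h f) ∧
      L2h h (Dh h f) ≤
        Real.sqrt (∫ ξ in (-(π / h))..(π / h), ξ ^ 2 * ‖fhat h f ξ‖ ^ 2) := by
  have hπ := Real.pi_pos
  have hab : (-(π/h)) ≤ π/h := by
    have := div_pos hπ hh; linarith
  -- summability of the discrete derivative
  have hfD : Summable fun m : ℤ => ‖Dh h f m‖ := by
    have h1 : Summable fun m : ℤ => ‖f (m+1)‖ := by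
      have := (Equiv.addRight (1:ℤ)).summable_iff (f := fun m : ℤ => ‖f m‖)
      exact this.mpr hf
    apply Summable.of_nonneg_of_le (fun m => norm_nonneg _) _ ((h1.add hf).div_const h)
    intro m
    simp only [Dh]
    rw [norm_div, Complex.norm_real, Real.norm_eq_abs, abs_of_pos hh]
    exact (div_le_div_iff_of_pos_right hh).mpr (norm_sub_le _ _)
  have hplan := plancherel h hh (Dh h f) hfD
  -- pointwise identity for the integrand
  have hpt : ∀ ξ : ℝ, ‖fhat h (Dh h f) ξ‖^2
      = (4 * Real.sin (h*ξ/2)^2 / h^2) * ‖fhat h f ξ‖^2 := by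
    intro ξ
    rw [fhat_Dh h hh f hf ξ, norm_mul, mul_pow]
    congr 1
    rw [norm_div, Complex.norm_real, Real.norm_eq_abs, abs_of_pos hh, div_pow,
      norm_exp_sq (h*ξ)]
  have hBeq : (∫ ξ in (-(π / h))..(π / h), ‖fhat h (Dh h f) ξ‖^2)
      = ∫ ξ in (-(π / h))..(π / h), (4 * Real.sin (h*ξ/2)^2 / h^2) * ‖fhat h f ξ‖^2 :=
    intervalIntegral.integral_congr (fun ξ _ => hpt ξ)
  set A := ∫ ξ in (-(π / h))..(π / h), ξ ^ 2 * ‖fhat h f ξ‖ ^ 2 with hA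
  set B := ∫ ξ in (-(π / h))..(π / h), (4 * Real.sin (h*ξ/2)^2 / h^2) * ‖fhat h f ξ‖^2 with hB
  have hL : L2h h (Dh h f) = Real.sqrt B := by
    rw [L2h, ← hplan, hBeq]
  -- integrability
  have hcf : Continuous (fun ξ : ℝ => fhat h f ξ) := by
    have : (fun ξ : ℝ => fhat h f ξ) = fun ξ : ℝ => ((h / Real.sqrt (2 * π) : ℝ) : ℂ) *
        ∑' m : ℤ, f m * Complex.exp (-Complex.I * ((h * m : ℝ) : ℂ) * (ξ : ℂ)) := by
      funext ξ; rw [fhat]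
    rw [this]
    exact continuous_const.mul (cont_S h f hf)
  have hiA : IntervalIntegrable (fun ξ : ℝ => ξ ^ 2 * ‖fhat h f ξ‖ ^ 2) volume
      (-(π/h)) (π/h) := by
    apply Continuous.intervalIntegrable
    fun_prop
  have hiB : IntervalIntegrable (fun ξ : ℝ => (4 * Real.sin (h*ξ/2)^2 / h^2) * ‖fhat h f ξ‖^2)
      volume (-(π/h)) (π/h) := by
    apply Continuous.intervalIntegrable
    fun_prop
  have hiA2 : IntervalIntegrable (fun ξ : ℝ => (2/π)^2 * (ξ ^ 2 * ‖fhat h f ξ‖ ^ 2)) volume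
      (-(π/h)) (π/h) := by
    apply Continuous.intervalIntegrable
    fun_prop
  -- comparisons
  have hBleA : B ≤ A := by
    rw [hA, hB]
    apply intervalIntegral.integral_mono_on hab hiB hiA
    intro ξ _
    exact mul_le_mul_of_nonneg_right (up_bound h hh ξ) (sq_nonneg _)
  have hAleB : (2/π)^2 * A ≤ B := by
    rw [hA, hB, ← intervalIntegral.integral_const_mul]
    apply intervalIntegral.integral_mono_on hab hiA2 hiB
    intro ξ hξ
    rw [← mul_assoc]
    apply mul_le_mul_of_nonneg_right _ (sq_nonneg _)
    apply low_bound h hh ξ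
    rw [abs_le]
    exact ⟨hξ.1, hξ.2⟩
  have hA0 : 0 ≤ A := by
    rw [hA]
    apply intervalIntegral.integral_nonneg hab
    intro ξ _
    positivity
  constructor
  · rw [hL]
    calc (2/π) * Real.sqrt A = Real.sqrt ((2/π)^2 * A) := by
          rw [Real.sqrt_mul (by positivity), Real.sqrt_sq (by positivity)]
      _ ≤ Real.sqrt B := Real.sqrt_le_sqrt hAleB
  · rw [hL]
    exact Real.sqrt_le_sqrt hBleA
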